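/- Let L be a finite field extension of ℚ and let K be an intermediate field with dim_ℚ K = n. Then there exists a basis ζ₁, …, ζₙ of K as a ℚ-vector space such that ζ₁ = 1 and, for all indices i > j, the field trace of ζᵢ/ζⱼ from L to ℚ is zero (each basis element ζᵢ is nonzero, so the quotients ζᵢ/ζⱼ are well-defined elements of L). -/

import Mathlib

open Module LinearMap

/-- Dimension bound: intersection of `k` kernels of functionals has codimension at most `k`. -/
private lemma aux_dim_bound {F V : Type*} [Field F] [AddCommGroup V] [Module F V]
    [FiniteDimensional F V] :
    ∀ (k : ℕ) (f : Fin k → (V →ₗ[F] F)),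
      finrank F V ≤ finrank F ↥(⨅ j, LinearMap.ker (f j)) + k := by
  intro k
  induction k with
  | zero =>
      intro f
      rw [iInf_of_empty, finrank_top]
      omega
  | succ k ih =>
      intro f
      set A : Submodule F V := ⨅ j : Fin k, LinearMap.ker (f j.castSucc) with hA
      set B : Submodule F V := LinearMap.ker (f (Fin.last k)) with hB
      have hih : finrank F V ≤ finrank F ↥A + k := ih fun j => f j.castSucc
      have hinf : (⨅ j : Fin (k + 1), LinearMap.ker (f j)) = A ⊓ B := by
        apply le_antisymm
        · exact le_inf (le_iInf fun j => iInf_le _ _) (iInf_le _ _)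
        · refine le_iInf fun j => ?_
          cases j using Fin.lastCases with
          | last => exact inf_le_right
          | cast j => exact inf_le_left.trans (iInf_le _ j)
      rw [hinf]
      by_cases hf : f (Fin.last k) = 0
      · have hBtop : B = ⊤ := by simp [hB, hf]
        rw [hBtop, inf_top_eq]
        omega
      · have hkerB : finrank F ↥B + 1 = finrank F V :=
          Module.Dual.finrank_ker_add_one_of_ne_zero hf
        have hEq := Submodule.finrank_sup_add_finrank_inf_eq A B
        have hsup : finrank F ↥(A ⊔ B) ≤ finrank F V := Submodule.finrank_le _
        omega

/-- The trace functional `x ↦ Tr(x / z)` on an intermediate field. -/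
private noncomputable def Gmap (L : Type*) [Field L] [Algebra ℚ L]
    (K : IntermediateField ℚ L) (z : L) : K →ₗ[ℚ] ℚ where
  toFun x := Algebra.trace ℚ L ((x : L) / z)
  map_add' x y := by push_cast; rw [add_div, map_add]
  map_smul' c x := by
    rw [IntermediateField.coe_smul, smul_div_assoc, map_smul, smul_eq_mul]
    rfl

theorem stmt_9 (L : Type*) [Field L] [Algebra ℚ L] [FiniteDimensional ℚ L]
    (K : IntermediateField ℚ L) (n : ℕ) (hn : Module.finrank ℚ K = n) (hn0 : 0 < n) :
    ∃ b : Basis (Fin n) ℚ K, b ⟨0, hn0⟩ = 1 ∧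
      ∀ i j : Fin n, (j : ℕ) < (i : ℕ) →
        Algebra.trace ℚ L ((b i : L) / (b j : L)) = 0 := by
  haveI : FiniteDimensional ℚ K := FiniteDimensional.left ℚ K L
  have hGapp : ∀ (z : L) (x : K), Gmap L K z x = Algebra.trace ℚ L ((x : L) / z) :=
    fun _ _ => rfl
  have htr1 : Algebra.trace ℚ L 1 = (finrank ℚ L : ℚ) := by
    simpa using Algebra.trace_algebraMap (R := ℚ) (S := L) 1
  have htrne : (finrank ℚ L : ℚ) ≠ 0 := by
    have : 0 < finrank ℚ L := finrank_pos
    exact_mod_cast this.ne'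
  -- inductive construction of the family
  have main : ∀ k : ℕ, k ≤ n → ∃ ζ : Fin k → K,
      (∀ i, ζ i ≠ 0) ∧ (∀ h0 : 0 < k, ζ ⟨0, h0⟩ = 1) ∧
      ∀ i j : Fin k, (j : ℕ) < (i : ℕ) →
        Algebra.trace ℚ L ((ζ i : L) / (ζ j : L)) = 0 := by
    intro k
    induction k with
    | zero =>
        intro _
        exact ⟨fun i => i.elim0, fun i => i.elim0, fun h0 => absurd h0 (by omega),
          fun i => i.elim0⟩
    | succ k ih =>
        intro hk
        obtain ⟨ζ, hζ0, hζ1, hζtr⟩ := ih (by omega)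
        set W : Submodule ℚ K := ⨅ j : Fin k, LinearMap.ker (Gmap L K (ζ j : L)) with hW
        -- obtain a suitable new element x ∈ W, x ≠ 0, and x = 1 if k = 0
        have hx : ∃ x : K, x ∈ W ∧ x ≠ 0 ∧ (k = 0 → x = 1) := by
          rcases Nat.eq_zero_or_pos k with hk0 | hk0
          · refine ⟨1, ?_, one_ne_zero, fun _ => rfl⟩
            subst hk0
            rw [hW, iInf_of_empty]
            exact Submodule.mem_top
          · have hdim : finrank ℚ ↥K ≤ finrank ℚ ↥W + k :=
              aux_dim_bound k fun j => Gmap L K (ζ j : L)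
            have hWpos : 0 < finrank ℚ ↥W := by rw [hn] at hdim; omega
            have hWbot : W ≠ ⊥ := by
              intro h
              rw [h, finrank_bot] at hWpos
              omega
            obtain ⟨x, hxW, hx0⟩ := Submodule.exists_mem_ne_zero_of_ne_bot hWbot
            exact ⟨x, hxW, hx0, fun h => absurd h (by omega)⟩
        obtain ⟨x, hxW, hx0, hx1⟩ := hx
        have hxtr : ∀ j : Fin k, Algebra.trace ℚ L ((x : L) / (ζ j : L)) = 0 := by
          intro j
          have := (Submodule.mem_iInf _).1 hxW j
          rw [LinearMap.mem_ker] at this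
          rw [← hGapp]
          exact this
        refine ⟨Fin.snoc ζ x, ?_, ?_, ?_⟩
        · intro i
          cases i using Fin.lastCases with
          | last => simpa using hx0
          | cast i => simpa using hζ0 i
        · intro h0
          rcases Nat.eq_zero_or_pos k with hk0 | hk0
          · have he : (⟨0, h0⟩ : Fin (k + 1)) = Fin.last k := by
              subst hk0; rfl
            rw [he, Fin.snoc_last]
            exact hx1 hk0
          · have he : (⟨0, h0⟩ : Fin (k + 1)) = Fin.castSucc ⟨0, hk0⟩ := rfl
            rw [he, Fin.snoc_castSucc]
            exact hζ1 hk0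
        · intro i j hij
          cases i using Fin.lastCases with
          | last =>
              have hj : (j : ℕ) < k := by
                have := j.isLt
                simpa using hij
              have he : j = Fin.castSucc ⟨j, hj⟩ := by ext; rfl
              rw [he, Fin.snoc_last, Fin.snoc_castSucc]
              exact hxtr _
          | cast i =>
              have hj : (j : ℕ) < k := lt_of_lt_of_le hij (by simpa using i.isLt.le)
              have hj' : j = Fin.castSucc ⟨j, hj⟩ := by ext; rfl
              rw [hj', Fin.snoc_castSucc, Fin.snoc_castSucc]
              exact hζtr i ⟨j, hj⟩ (by simpa using hij)
  obtain ⟨ζ, hζ0, hζ1, hζtr⟩ := main n le_rfl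
  -- linear independence
  have hli : LinearIndependent ℚ ζ := by
    rw [linearIndependent_iff']
    intro s a hsum
    suffices H : ∀ m : ℕ, ∀ i ∈ s, (i : ℕ) = m → a i = 0 by
      intro i hi
      exact H i i hi rfl
    intro m
    induction m using Nat.strong_induction_on with
    | _ m IH =>
        intro i hi him
        have happ := congrArg (Gmap L K (ζ i : L)) hsum
        rw [map_sum, map_zero] at happ
        simp only [hGapp, IntermediateField.coe_smul, smul_div_assoc, map_smul,
          smul_eq_mul] at happ
        have hsplit : ∀ j ∈ s, a j * Algebra.trace ℚ L ((ζ j : L) / (ζ i : L)) =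
            if j = i then a i * (finrank ℚ L : ℚ) else 0 := by
          intro j hj
          rcases lt_trichotomy (j : ℕ) (i : ℕ) with h | h | h
          · rw [if_neg (by intro he; rw [he] at h; omega)]
            have : a j = 0 := IH j (by omega) j hj rfl
            rw [this, zero_mul]
          · have hji : j = i := Fin.ext h
            rw [if_pos hji, hji]
            have hζiL : (ζ i : L) ≠ 0 := by
              intro h0
              exact hζ0 i (Subtype.ext h0)
            rw [div_self hζiL, htr1]
          · rw [if_neg (by intro he; rw [he] at h; omega), hζtr j i h, mul_zero]
        rw [Finset.sum_congr rfl hsplit, Finset.sum_ite_eq' s i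
          (fun _ => a i * (finrank ℚ L : ℚ)), if_pos hi] at happ
        exact (mul_eq_zero.1 happ).resolve_right htrne
  have hcard : Fintype.card (Fin n) = finrank ℚ K := by simp [hn]
  haveI : Nonempty (Fin n) := ⟨⟨0, hn0⟩⟩
  refine ⟨basisOfLinearIndependentOfCardEqFinrank hli hcard, ?_, ?_⟩
  · rw [coe_basisOfLinearIndependentOfCardEqFinrank]
    exact hζ1 hn0
  · intro i j hij
    rw [coe_basisOfLinearIndependentOfCardEqFinrank]
    exact hζtr i j hij
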